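/- Let λ > 0 and let φ : (0,∞) → ℂ be a solution of −Δ⁽¹⁾φ = λφ on (R, ∞), where Δ⁽¹⁾w = (1/r²)(r²w')' − (2/r²)w. If φ ∈ L²((R,∞), r²dr), then φ = 0 on (R, ∞). -/

import Mathlib

open MeasureTheory Set

set_option maxHeartbeats 2000000 in
lemma key {R lam : ℝ} (hR : 0 < R) (hlam : 0 < lam) {u u1 : ℝ → ℝ}
    (hu : ∀ r ∈ Ioi R, HasDerivAt u (u1 r) r)
    (hu1 : ∀ r ∈ Ioi R, HasDerivAt u1 ((2 / r ^ 2 - lam) * u r) r)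
    (hL2 : Integrable (fun r => u r ^ 2) (volume.restrict (Ioi R))) :
    ∀ r ∈ Ioi R, u r = 0 := by
  intro r₀ hr₀
  by_contra h0
  set q : ℝ → ℝ := fun t => 2 / t ^ 2 - lam with hq_def
  have hr₀R : R < r₀ := hr₀
  have hr₀0 : 0 < r₀ := hR.trans hr₀R
  set r₁ : ℝ := max (r₀ + 1) (Real.sqrt (2 / lam) + 1) with hr₁_def
  have hr₁r₀ : r₀ < r₁ := lt_of_lt_of_le (lt_add_one r₀) (le_max_left _ _)
  have hr₁R : R < r₁ := hr₀R.trans hr₁r₀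
  have hr₁0 : 0 < r₁ := hR.trans hr₁R
  have hsqrt : Real.sqrt (2 / lam) + 1 ≤ r₁ := le_max_right _ _
  -- q bounds
  have hqneg : ∀ t, r₁ ≤ t → q t < 0 := by
    intro t ht
    have h1 : Real.sqrt (2 / lam) < t := by
      have := lt_add_one (Real.sqrt (2 / lam)); linarith [hsqrt.trans ht]
    have hs0 : (0:ℝ) ≤ 2 / lam := le_of_lt (div_pos two_pos hlam)
    have h2 : 2 / lam < t ^ 2 := by
      have hsq := Real.sq_sqrt hs0
      nlinarith [Real.sqrt_nonneg (2 / lam)]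
    have ht0 : 0 < t := hr₁0.trans_le ht
    have h3 : 2 / t ^ 2 < lam := by
      rw [div_lt_iff₀ (by positivity)]
      rw [div_lt_iff₀ hlam] at h2
      nlinarith
    simp only [hq_def]; linarith
  have hqge : ∀ t : ℝ, 0 < t → -lam ≤ q t := by
    intro t ht
    have : (0:ℝ) ≤ 2 / t ^ 2 := by positivity
    simp only [hq_def]; linarith
  have hqle : ∀ t : ℝ, r₀ ≤ t → q t ≤ 2 / r₀ ^ 2 := by
    intro t ht
    have ht0 : 0 < t := hr₀0.trans_le ht
    have h1 : 2 / t ^ 2 ≤ 2 / r₀ ^ 2 := by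
      apply div_le_div_of_nonneg_left (by norm_num) (by positivity)
      nlinarith
    simp only [hq_def]; linarith
  -- derivative of q
  have hq' : ∀ t : ℝ, 0 < t → HasDerivAt q (-(4 / t ^ 3)) t := by
    intro t ht
    have h2 := (hasDerivAt_pow 2 t).inv (by positivity)
    have h3 := (h2.const_mul (2:ℝ)).sub_const lam
    have hfe : q = fun x : ℝ => 2 * (x ^ 2)⁻¹ - lam := by
      funext x; simp [hq_def, div_eq_mul_inv]
    rw [hfe]
    refine h3.congr_deriv ?_
    field_simp
    ring
  -- Step A : nontrivial data at r₁
  have hNpos : 0 < u r₁ ^ 2 + u1 r₁ ^ 2 := by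
    by_contra hN
    push_neg at hN
    have hz1 : u r₁ = 0 := by nlinarith [sq_nonneg (u r₁), sq_nonneg (u1 r₁)]
    have hz2 : u1 r₁ = 0 := by nlinarith [sq_nonneg (u r₁), sq_nonneg (u1 r₁)]
    set C : ℝ := 1 + (2 / r₀ ^ 2 + lam) with hC_def
    have hCpos : 0 < C := by positivity
    set h : ℝ → ℝ := fun t => Real.exp (C * t) * (u t ^ 2 + u1 t ^ 2) with hh_def
    have hd : ∀ t ∈ Icc r₀ r₁, HasDerivAt h
        (Real.exp (C * t) * C * (u t ^ 2 + u1 t ^ 2) +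
          Real.exp (C * t) * (2 * u t ^ 1 * u1 t + 2 * u1 t ^ 1 * (q t * u t))) t := by
      intro t htI
      have htR : t ∈ Ioi R := lt_of_lt_of_le hr₀R htI.1
      have hexp : HasDerivAt (fun t : ℝ => Real.exp (C * t)) (Real.exp (C * t) * C) t := by
        simpa using ((hasDerivAt_id t).const_mul C).exp
      have hN' : HasDerivAt (fun t => u t ^ 2 + u1 t ^ 2)
          (2 * u t ^ 1 * u1 t + 2 * u1 t ^ 1 * (q t * u t)) t :=
        ((hu t htR).pow 2).add ((hu1 t htR).pow 2)
      exact hexp.mul hN'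
    have hmono : MonotoneOn h (Icc r₀ r₁) := by
      apply monotoneOn_of_deriv_nonneg (convex_Icc _ _)
      · intro t htI
        exact (hd t htI).continuousAt.continuousWithinAt
      · intro t htI
        rw [interior_Icc] at htI
        exact (hd t (Ioo_subset_Icc_self htI)).differentiableAt.differentiableWithinAt
      · intro t htI
        rw [interior_Icc] at htI
        have htI' := Ioo_subset_Icc_self htI
        rw [(hd t htI').deriv]
        have hub := hqle t htI'.1
        have hlb := hqge t (hr₀0.trans_le htI'.1)
        have hq1 : 1 + q t ≤ C := by simp only [hC_def]; linarith
        have h2r : (0:ℝ) ≤ 2 / r₀ ^ 2 := by positivity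
        have hq2 : -C ≤ 1 + q t := by simp only [hC_def, hq_def] at hlb ⊢; linarith
        have hepos := Real.exp_pos (C * t)
        have key2 : 0 ≤ C * (u t ^ 2 + u1 t ^ 2) +
            (2 * u t ^ 1 * u1 t + 2 * u1 t ^ 1 * (q t * u t)) := by
          nlinarith [mul_nonneg (by linarith : (0:ℝ) ≤ C - (1 + q t)) (sq_nonneg (u t - u1 t)),
            mul_nonneg (by linarith : (0:ℝ) ≤ C + (1 + q t)) (sq_nonneg (u t + u1 t))]
        nlinarith
    have hle : h r₀ ≤ h r₁ := hmono ⟨le_refl _, hr₁r₀.le⟩ ⟨hr₁r₀.le, le_refl _⟩ hr₁r₀.le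
    have hhr₁ : h r₁ = 0 := by simp [hh_def, hz1, hz2]
    have hepos := Real.exp_pos (C * r₀)
    have : u r₀ ^ 2 ≤ 0 := by
      rw [hhr₁] at hle
      simp only [hh_def] at hle
      nlinarith [sq_nonneg (u1 r₀)]
    exact h0 (pow_eq_zero_iff two_ne_zero |>.mp (le_antisymm this (sq_nonneg _)))
  -- Step B : energy monotone
  set E : ℝ → ℝ := fun t => u1 t ^ 2 - q t * u t ^ 2 with hE_def
  have hE' : ∀ t, r₁ ≤ t → HasDerivAt E (4 / t ^ 3 * u t ^ 2) t := by
    intro t ht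
    have htR : t ∈ Ioi R := lt_of_lt_of_le hr₁R ht
    have ht0 : 0 < t := hR.trans htR
    have h1 := (hu1 t htR).pow 2
    have h2 := (hq' t ht0).mul ((hu t htR).pow 2)
    have h3 := h1.sub h2
    refine h3.congr_deriv ?_
    simp only [hq_def, Pi.pow_apply]
    ring
  have hEmono : ∀ t, r₁ ≤ t → E r₁ ≤ E t := by
    intro t ht
    have hmono : MonotoneOn E (Icc r₁ t) := by
      apply monotoneOn_of_deriv_nonneg (convex_Icc _ _)
      · intro s hs; exact (hE' s hs.1).continuousAt.continuousWithinAt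
      · intro s hs
        rw [interior_Icc] at hs
        exact (hE' s hs.1.le).differentiableAt.differentiableWithinAt
      · intro s hs
        rw [interior_Icc] at hs
        rw [(hE' s hs.1.le).deriv]
        have hs0 : 0 < s := hr₁0.trans hs.1
        positivity
    exact hmono ⟨le_refl _, ht⟩ ⟨ht, le_refl _⟩ ht
  set e : ℝ := E r₁ with he_def
  have hepos : 0 < e := by
    have hq1 : q r₁ < 0 := hqneg r₁ le_rfl
    rcases eq_or_ne (u1 r₁) 0 with h | h
    · have h2 : 0 < u r₁ ^ 2 := by nlinarith [sq_nonneg (u r₁)]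
      simp only [he_def, hE_def, h]
      nlinarith
    · have h2 : 0 < u1 r₁ ^ 2 := by positivity
      have h3 : 0 ≤ -q r₁ * u r₁ ^ 2 := mul_nonneg (by linarith) (sq_nonneg _)
      simp only [he_def, hE_def]
      nlinarith
  -- integral bound
  set M : ℝ := ∫ r in Ioi R, u r ^ 2 with hM_def
  have hM0 : 0 ≤ M := setIntegral_nonneg measurableSet_Ioi (fun r _ => sq_nonneg _)
  have hIoc : ∀ a b : ℝ, R < a → (∫ s in a..b, u s ^ 2) ≤ M := by
    intro a b ha
    rcases le_or_gt a b with hab | hab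
    · rw [intervalIntegral.integral_of_le hab]
      apply setIntegral_mono_set hL2
      · filter_upwards with x using sq_nonneg _
      · exact ((Ioc_subset_Ioi_self.trans (Ioi_subset_Ioi ha.le)) : Ioc a b ⊆ Ioi R).eventuallyLE
    · rw [intervalIntegral.integral_of_ge hab.le]
      have : 0 ≤ ∫ s in Ioc b a, u s ^ 2 :=
        setIntegral_nonneg measurableSet_Ioc (fun r _ => sq_nonneg _)
      linarith
  -- Step C : P grows
  set P : ℝ → ℝ := fun t => u t * u1 t with hP_def
  have hP' : ∀ t ∈ Ioi R, HasDerivAt P (u1 t ^ 2 + q t * u t ^ 2) t := by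
    intro t ht
    have := (hu t ht).mul (hu1 t ht)
    refine this.congr_deriv ?_
    simp only [hq_def]
    ring
  have hcu : ∀ a b : ℝ, R < a → ContinuousOn u (Icc a b) := by
    intro a b ha s hs
    exact (hu s (ha.trans_le hs.1)).continuousAt.continuousWithinAt
  have hcu1 : ∀ a b : ℝ, R < a → ContinuousOn u1 (Icc a b) := by
    intro a b ha s hs
    exact (hu1 s (ha.trans_le hs.1)).continuousAt.continuousWithinAt
  have hcq : ∀ a b : ℝ, 0 < a → ContinuousOn q (Icc a b) := by
    intro a b ha s hs
    exact (hq' s (ha.trans_le hs.1)).continuousAt.continuousWithinAt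
  have hPgrow : ∀ t, r₁ ≤ t → P r₁ + (e * (t - r₁) - 2 * lam * M) ≤ P t := by
    intro t ht
    have huIcc : uIcc r₁ t = Icc r₁ t := uIcc_of_le ht
    have int2 : IntervalIntegrable (fun s => u1 s ^ 2 + q s * u s ^ 2) volume r₁ t := by
      apply ContinuousOn.intervalIntegrable
      rw [huIcc]
      exact ((hcu1 r₁ t hr₁R).pow 2).add ((hcq r₁ t hr₁0).mul ((hcu r₁ t hr₁R).pow 2))
    have int1 : IntervalIntegrable (fun s => e - 2 * lam * u s ^ 2) volume r₁ t := by
      apply ContinuousOn.intervalIntegrable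
      rw [huIcc]
      exact continuousOn_const.sub (continuousOn_const.mul ((hcu r₁ t hr₁R).pow 2))
    have intu2 : IntervalIntegrable (fun s => u s ^ 2) volume r₁ t := by
      apply ContinuousOn.intervalIntegrable
      rw [huIcc]
      exact (hcu r₁ t hr₁R).pow 2
    have key1 : (∫ s in r₁..t, (e - 2 * lam * u s ^ 2)) ≤
        ∫ s in r₁..t, (u1 s ^ 2 + q s * u s ^ 2) := by
      apply intervalIntegral.integral_mono_on ht int1 int2
      intro s hs
      have hEs := hEmono s hs.1
      have hqs : -lam ≤ q s := hqge s (hr₁0.trans_le hs.1)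
      simp only [hE_def] at hEs
      nlinarith [mul_nonneg (by linarith : (0:ℝ) ≤ q s + lam) (sq_nonneg (u s))]
    have hftc : (∫ s in r₁..t, (u1 s ^ 2 + q s * u s ^ 2)) = P t - P r₁ := by
      apply intervalIntegral.integral_eq_sub_of_hasDerivAt _ int2
      intro s hs
      rw [huIcc] at hs
      exact hP' s (hr₁R.trans_le hs.1)
    have hlhs : (∫ s in r₁..t, (e - 2 * lam * u s ^ 2)) =
        e * (t - r₁) - 2 * lam * ∫ s in r₁..t, u s ^ 2 := by
      rw [intervalIntegral.integral_sub intervalIntegrable_const (intu2.const_mul _),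
        intervalIntegral.integral_const, intervalIntegral.integral_const_mul]
      simp [smul_eq_mul]
      ring
    have hint_le : (∫ s in r₁..t, u s ^ 2) ≤ M := hIoc r₁ t hr₁R
    have h2lam : 2 * lam * (∫ s in r₁..t, u s ^ 2) ≤ 2 * lam * M :=
      mul_le_mul_of_nonneg_left hint_le (by positivity)
    rw [hlhs] at key1
    rw [hftc] at key1
    linarith
  -- choose T₀
  set T₀ : ℝ := r₁ + (1 + 2 * lam * M + |P r₁|) / e with hT₀_def
  have hnum : 0 < 1 + 2 * lam * M + |P r₁| := by positivity
  have hT₀r₁ : r₁ < T₀ := by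
    simp only [hT₀_def]
    have : 0 < (1 + 2 * lam * M + |P r₁|) / e := div_pos hnum hepos
    linarith
  have hT₀R : R < T₀ := hr₁R.trans hT₀r₁
  have hPge : ∀ t, T₀ ≤ t → 1 ≤ P t := by
    intro t ht
    have h1 := hPgrow t (hT₀r₁.le.trans ht)
    have h2 : e * (T₀ - r₁) ≤ e * (t - r₁) :=
      mul_le_mul_of_nonneg_left (by linarith) hepos.le
    have h3 : e * (T₀ - r₁) = 1 + 2 * lam * M + |P r₁| := by
      simp only [hT₀_def]
      field_simp
      ring
    have h4 : -|P r₁| ≤ P r₁ := neg_abs_le _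
    linarith
  -- quadratic growth of u²
  have hgrow : ∀ t, T₀ ≤ t → 2 * (t - T₀) ≤ u t ^ 2 := by
    intro t ht
    have huIcc : uIcc T₀ t = Icc T₀ t := uIcc_of_le ht
    have intP : IntervalIntegrable (fun s => 2 * (u s * u1 s)) volume T₀ t := by
      apply ContinuousOn.intervalIntegrable
      rw [huIcc]
      exact continuousOn_const.mul ((hcu T₀ t hT₀R).mul (hcu1 T₀ t hT₀R))
    have hftc : (∫ s in T₀..t, 2 * (u s * u1 s)) = u t ^ 2 - u T₀ ^ 2 := by
      apply intervalIntegral.integral_eq_sub_of_hasDerivAt _ intP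
      intro s hs
      rw [huIcc] at hs
      have := (hu s (hT₀R.trans_le hs.1)).pow 2
      refine this.congr_deriv ?_
      ring
    have hmono2 : (∫ s in T₀..t, (2:ℝ)) ≤ ∫ s in T₀..t, 2 * (u s * u1 s) := by
      apply intervalIntegral.integral_mono_on ht intervalIntegrable_const intP
      intro s hs
      have := hPge s hs.1
      simp only [hP_def] at this
      linarith
    rw [hftc, intervalIntegral.integral_const, smul_eq_mul] at hmono2
    nlinarith [sq_nonneg (u T₀)]
  -- final contradiction
  set T₁ : ℝ := T₀ + (M + 1) with hT₁_def
  have hT₁ : T₀ ≤ T₁ := by simp only [hT₁_def]; linarith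
  have huIcc : uIcc T₀ T₁ = Icc T₀ T₁ := uIcc_of_le hT₁
  have intu2 : IntervalIntegrable (fun s => u s ^ 2) volume T₀ T₁ := by
    apply ContinuousOn.intervalIntegrable
    rw [huIcc]
    exact (hcu T₀ T₁ hT₀R).pow 2
  have intlin : IntervalIntegrable (fun s => 2 * (s - T₀)) volume T₀ T₁ := by
    apply ContinuousOn.intervalIntegrable
    exact (continuousOn_const.mul ((continuous_id.sub continuous_const).continuousOn))
  have hcompare : (∫ s in T₀..T₁, 2 * (s - T₀)) ≤ ∫ s in T₀..T₁, u s ^ 2 := by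
    apply intervalIntegral.integral_mono_on hT₁ intlin intu2
    intro s hs
    exact hgrow s hs.1
  have hlin : (∫ s in T₀..T₁, 2 * (s - T₀)) = (M + 1) ^ 2 := by
    have hftc := intervalIntegral.integral_eq_sub_of_hasDerivAt
      (f := fun s => (s - T₀) ^ 2) (f' := fun s => 2 * (s - T₀))
      (fun s _ => by exact (((hasDerivAt_id s).sub_const T₀).pow 2).congr_deriv (by simp)) intlin
    rw [hftc]
    simp only [hT₁_def]
    ring
  have hfin : (∫ s in T₀..T₁, u s ^ 2) ≤ M := hIoc T₀ T₁ hT₀R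
  rw [hlin] at hcompare
  nlinarith

/-- if `λ > 0` and `φ` solves `−Δ⁽¹⁾φ = λφ` on `(R,∞)`, where
`Δ⁽¹⁾w = (1/r²)(r²w')' − (2/r²)w`, and `φ ∈ L²((R,∞), r²dr)`, then `φ = 0` on `(R,∞)`. -/
theorem stmt16 (R lam : ℝ) (hR : 0 < R) (hlam : 0 < lam) (φ : ℝ → ℂ)
    (hd1 : ∀ r ∈ Ioi R, DifferentiableAt ℝ φ r)
    (hd2 : ∀ r ∈ Ioi R, DifferentiableAt ℝ (fun s : ℝ => (s ^ 2 : ℂ) * deriv φ s) r)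
    (hode : ∀ r ∈ Ioi R,
      -((1 / (r ^ 2 : ℂ)) * deriv (fun s : ℝ => (s ^ 2 : ℂ) * deriv φ s) r -
          (2 / (r ^ 2 : ℂ)) * φ r) = (lam : ℂ) * φ r)
    (hL2 : Integrable (fun r => ‖φ r‖ ^ 2 * r ^ 2) (volume.restrict (Ioi R))) :
    EqOn φ 0 (Ioi R) := by
  set g : ℝ → ℂ := fun s : ℝ => (s ^ 2 : ℂ) * deriv φ s with hg_def
  set w : ℝ → ℂ := fun s : ℝ => (s : ℂ) * φ s with hw_def
  set W1 : ℝ → ℂ := fun s : ℝ => φ s + g s / (s : ℂ) with hW1_def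
  -- basic facts
  have hr0 : ∀ r ∈ Ioi R, (r : ℂ) ≠ 0 := by
    intro r hr
    exact_mod_cast ne_of_gt (lt_trans hR hr)
  -- derivative of g
  have hdg : ∀ r ∈ Ioi R, HasDerivAt g (2 * φ r - lam * r ^ 2 * φ r) r := by
    intro r hr
    have h := hode r hr
    have hr0' := hr0 r hr
    have hD : deriv g r = 2 * φ r - lam * r ^ 2 * φ r := by
      field_simp at h
      linear_combination -h
    have := (hd2 r hr).hasDerivAt
    rwa [hD] at this
  -- derivative of w
  have hdw : ∀ r ∈ Ioi R, HasDerivAt w (W1 r) r := by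
    intro r hr
    have hr0' := hr0 r hr
    have h1 : HasDerivAt (fun s : ℝ => (s : ℂ)) 1 r := by
      simpa using (hasDerivAt_id r).ofReal_comp
    have h2 := h1.mul ((hd1 r hr).hasDerivAt)
    have : W1 r = 1 * φ r + (r : ℂ) * deriv φ r := by
      simp only [hW1_def, hg_def]
      field_simp
    rw [this]
    exact h2
  -- derivative of W1
  have hdW1 : ∀ r ∈ Ioi R, HasDerivAt W1 ((2 / (r : ℂ) ^ 2 - lam) * w r) r := by
    intro r hr
    have hr0' := hr0 r hr
    have h1 : HasDerivAt (fun s : ℝ => (s : ℂ)) 1 r := by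
      simpa using (hasDerivAt_id r).ofReal_comp
    have h2 := (hdg r hr).div h1 hr0'
    have h3 := ((hd1 r hr).hasDerivAt).add h2
    have heq : deriv φ r + ((2 * φ r - lam * r ^ 2 * φ r) * r - g r * 1) / (r : ℂ) ^ 2
        = (2 / (r : ℂ) ^ 2 - lam) * w r := by
      simp only [hg_def, hw_def]
      field_simp
      ring
    rw [heq] at h3
    exact h3
  -- real/imaginary parts
  have mainRe : ∀ r ∈ Ioi R, (w r).re = 0 := by
    apply key hR hlam (u := fun s => (w s).re) (u1 := fun s => (W1 s).re)
    · intro r hr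
      exact (Complex.reCLM.hasFDerivAt.comp_hasDerivAt r (hdw r hr))
    · intro r hr
      have := Complex.reCLM.hasFDerivAt.comp_hasDerivAt r (hdW1 r hr)
      have heq : Complex.reCLM ((2 / (r : ℂ) ^ 2 - lam) * w r)
          = (2 / r ^ 2 - lam) * (w r).re := by
        have : (2 / (r : ℂ) ^ 2 - (lam : ℂ)) = ((2 / r ^ 2 - lam : ℝ) : ℂ) := by
          push_cast; ring
        rw [this]
        simp only [Complex.reCLM_apply, Complex.re_ofReal_mul]
      rwa [heq] at this
    · apply hL2.mono'
      · apply ContinuousOn.aestronglyMeasurable _ measurableSet_Ioi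
        have hcw : ContinuousOn w (Ioi R) := fun r hr => (hdw r hr).continuousAt.continuousWithinAt
        exact (Complex.continuous_re.comp_continuousOn hcw).pow 2
      · filter_upwards with r
        have h1 : |(w r).re| ≤ ‖w r‖ := Complex.abs_re_le_norm (w r)
        have h2 : ‖w r‖ ^ 2 = ‖φ r‖ ^ 2 * r ^ 2 := by
          simp only [hw_def]
          rw [norm_mul, mul_pow, Complex.norm_real, Real.norm_eq_abs, sq_abs]
          ring
        have h3 : (w r).re ^ 2 ≤ ‖w r‖ ^ 2 := by
          rw [← sq_abs ((w r).re)]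
          exact pow_le_pow_left₀ (abs_nonneg _) h1 2
        rw [h2] at h3
        calc ‖(w r).re ^ 2‖ = (w r).re ^ 2 := by
              rw [Real.norm_eq_abs, abs_of_nonneg (sq_nonneg _)]
          _ ≤ _ := h3
  have mainIm : ∀ r ∈ Ioi R, (w r).im = 0 := by
    apply key hR hlam (u := fun s => (w s).im) (u1 := fun s => (W1 s).im)
    · intro r hr
      exact (Complex.imCLM.hasFDerivAt.comp_hasDerivAt r (hdw r hr))
    · intro r hr
      have := Complex.imCLM.hasFDerivAt.comp_hasDerivAt r (hdW1 r hr)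
      have heq : Complex.imCLM ((2 / (r : ℂ) ^ 2 - lam) * w r)
          = (2 / r ^ 2 - lam) * (w r).im := by
        have : (2 / (r : ℂ) ^ 2 - (lam : ℂ)) = ((2 / r ^ 2 - lam : ℝ) : ℂ) := by
          push_cast; ring
        rw [this]
        simp only [Complex.imCLM_apply, Complex.im_ofReal_mul]
      rwa [heq] at this
    · apply hL2.mono'
      · apply ContinuousOn.aestronglyMeasurable _ measurableSet_Ioi
        have hcw : ContinuousOn w (Ioi R) := fun r hr => (hdw r hr).continuousAt.continuousWithinAt
        exact (Complex.continuous_im.comp_continuousOn hcw).pow 2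
      · filter_upwards with r
        have h1 : |(w r).im| ≤ ‖w r‖ := Complex.abs_im_le_norm (w r)
        have h2 : ‖w r‖ ^ 2 = ‖φ r‖ ^ 2 * r ^ 2 := by
          simp only [hw_def]
          rw [norm_mul, mul_pow, Complex.norm_real, Real.norm_eq_abs, sq_abs]
          ring
        have h3 : (w r).im ^ 2 ≤ ‖w r‖ ^ 2 := by
          rw [← sq_abs ((w r).im)]
          exact pow_le_pow_left₀ (abs_nonneg _) h1 2
        rw [h2] at h3
        calc ‖(w r).im ^ 2‖ = (w r).im ^ 2 := by
              rw [Real.norm_eq_abs, abs_of_nonneg (sq_nonneg _)]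
          _ ≤ _ := h3
  intro r hr
  have hw0 : w r = 0 := Complex.ext (mainRe r hr) (mainIm r hr)
  have : (r : ℂ) * φ r = 0 := hw0
  rcases mul_eq_zero.mp this with h | h
  · exact absurd h (hr0 r hr)
  · simpa using h
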